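/- Let j > 0 be a real number and let A, A′, B, B′ be random variables on a common probability space such that |A| ≤ 1 and |A′| ≤ 1 almost surely, and |B| ≤ j and |B′| ≤ j almost surely. Then |E[AB] − E[AB′]| + |E[A′B] + E[A′B′]| ≤ 2j. In particular, for bounded observables normalized to take values in [−1, 1], the CHSH bound |E[AB] − E[AB′]| + |E[A′B] + E[A′B′]| ≤ 2 holds. -/
import Mathlib


open MeasureTheory

/-- The spin-`j` generalization of the CHSH inequality: if `|A| ≤ 1`, `|A'| ≤ 1` and
`|B| ≤ j`, `|B'| ≤ j` almost surely, then
`|E[AB] - E[AB']| + |E[A'B] + E[A'B']| ≤ 2j`. -/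
theorem chsh_spin_j
    {Ω : Type*} [MeasurableSpace Ω] (P : Measure Ω) [IsProbabilityMeasure P]
    (j : ℝ) (hj : 0 < j) (A A' B B' : Ω → ℝ)
    (hA : Measurable A) (hA' : Measurable A') (hB : Measurable B) (hB' : Measurable B')
    (hAbd : ∀ᵐ ω ∂P, |A ω| ≤ 1) (hA'bd : ∀ᵐ ω ∂P, |A' ω| ≤ 1)
    (hBbd : ∀ᵐ ω ∂P, |B ω| ≤ j) (hB'bd : ∀ᵐ ω ∂P, |B' ω| ≤ j) :
    |(∫ ω, A ω * B ω ∂P) - ∫ ω, A ω * B' ω ∂P| +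
      |(∫ ω, A' ω * B ω ∂P) + ∫ ω, A' ω * B' ω ∂P| ≤ 2 * j := by
  have key : ∀ (X : Ω → ℝ), Measurable X → (∀ᵐ ω ∂P, |X ω| ≤ 1) →
      ∀ (Y : Ω → ℝ), Measurable Y → (∀ᵐ ω ∂P, |Y ω| ≤ j) →
      Integrable (fun ω => X ω * Y ω) P := by
    intro X hX hXbd Y hY hYbd
    apply Integrable.mono' (integrable_const j) ((hX.mul hY).aestronglyMeasurable)
    filter_upwards [hXbd, hYbd] with ω h1 h2
    calc ‖X ω * Y ω‖ = |X ω| * |Y ω| := abs_mul _ _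
      _ ≤ 1 * j := mul_le_mul h1 h2 (abs_nonneg _) zero_le_one
      _ = j := one_mul j
  have iAB := key A hA hAbd B hB hBbd
  have iAB' := key A hA hAbd B' hB' hB'bd
  have iA'B := key A' hA' hA'bd B hB hBbd
  have iA'B' := key A' hA' hA'bd B' hB' hB'bd
  have iB : Integrable B P := by
    simpa using key (fun _ => 1) measurable_const (by simp) B hB hBbd
  have iB' : Integrable B' P := by
    simpa using key (fun _ => 1) measurable_const (by simp) B' hB' hB'bd
  have iD : Integrable (fun ω => |B ω - B' ω|) P := (iB.sub iB').abs
  have iS : Integrable (fun ω => |B ω + B' ω|) P := (iB.add iB').abs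
  have h1 : |(∫ ω, A ω * B ω ∂P) - ∫ ω, A ω * B' ω ∂P| ≤ ∫ ω, |B ω - B' ω| ∂P := by
    rw [← integral_sub iAB iAB']
    calc |∫ ω, (A ω * B ω - A ω * B' ω) ∂P| ≤ ∫ ω, |A ω * B ω - A ω * B' ω| ∂P := by
          simpa [Real.norm_eq_abs] using
            norm_integral_le_integral_norm (μ := P) (fun ω => A ω * B ω - A ω * B' ω)
      _ ≤ ∫ ω, |B ω - B' ω| ∂P := by
          apply integral_mono_ae (iAB.sub iAB').abs iD
          filter_upwards [hAbd] with ω h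
          calc |A ω * B ω - A ω * B' ω| = |A ω| * |B ω - B' ω| := by
                rw [← abs_mul]; ring_nf
            _ ≤ 1 * |B ω - B' ω| := mul_le_mul_of_nonneg_right h (abs_nonneg _)
            _ = |B ω - B' ω| := one_mul _
  have h2 : |(∫ ω, A' ω * B ω ∂P) + ∫ ω, A' ω * B' ω ∂P| ≤ ∫ ω, |B ω + B' ω| ∂P := by
    rw [← integral_add iA'B iA'B']
    calc |∫ ω, (A' ω * B ω + A' ω * B' ω) ∂P| ≤ ∫ ω, |A' ω * B ω + A' ω * B' ω| ∂P := by
          simpa [Real.norm_eq_abs] using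
            norm_integral_le_integral_norm (μ := P) (fun ω => A' ω * B ω + A' ω * B' ω)
      _ ≤ ∫ ω, |B ω + B' ω| ∂P := by
          apply integral_mono_ae (iA'B.add iA'B').abs iS
          filter_upwards [hA'bd] with ω h
          calc |A' ω * B ω + A' ω * B' ω| = |A' ω| * |B ω + B' ω| := by
                rw [← abs_mul]; ring_nf
            _ ≤ 1 * |B ω + B' ω| := mul_le_mul_of_nonneg_right h (abs_nonneg _)
            _ = |B ω + B' ω| := one_mul _
  have h3 : (∫ ω, |B ω - B' ω| ∂P) + (∫ ω, |B ω + B' ω| ∂P) ≤ 2 * j := by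
    rw [← integral_add iD iS]
    calc (∫ ω, (|B ω - B' ω| + |B ω + B' ω|) ∂P) ≤ ∫ _ω, 2 * j ∂P := by
          apply integral_mono_ae (iD.add iS)
            (integrable_const _)
          filter_upwards [hBbd, hB'bd] with ω h1 h2
          simp only [Pi.add_apply]
          rcases abs_cases (B ω - B' ω) with ⟨e1, _⟩ | ⟨e1, _⟩ <;>
            rcases abs_cases (B ω + B' ω) with ⟨e2, _⟩ | ⟨e2, _⟩ <;>
            rcases abs_le.mp h1 with ⟨_, _⟩ <;> rcases abs_le.mp h2 with ⟨_, _⟩ <;>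
            rw [e1, e2] <;> linarith
      _ = 2 * j := by simp
  linarith
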